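/- Let u ∈ C(B̄_r) ∩ C²({u>0} ∩ B_r) with u(0) = 0 satisfy Δu ≥ κ > 0 on the open set {u > 0} ∩ B_r, and suppose there exists x₀ ∈ B_{r/2} with u(x₀) > 0. Then sup_{∂B_r} u ≥ (κ/(4n)) (r/2)² = κ r²/(16n). -/

import Mathlib

open Real MeasureTheory Metric
open Filter Set RealInnerProductSpace

noncomputable def laplacian {n : ℕ} (f : EuclideanSpace ℝ (Fin n) → ℝ)
    (x : EuclideanSpace ℝ (Fin n)) : ℝ :=
  ∑ i, fderiv ℝ (fun y => fderiv ℝ f y (EuclideanSpace.single i 1)) x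
    (EuclideanSpace.single i 1)


lemma sd_test {f f' : ℝ → ℝ} {a : ℝ}
    (hmax : IsLocalMax f 0)
    (hf : ∀ᶠ t in nhds (0:ℝ), HasDerivAt f (f' t) t)
    (hf' : HasDerivAt f' a 0) : a ≤ 0 := by
  by_contra h
  push_neg at h
  have h0 : f' 0 = 0 := hmax.hasDerivAt_eq_zero hf.self_of_nhds
  have hs := hasDerivAt_iff_tendsto_slope.1 hf'
  have hpos : ∀ᶠ t in nhdsWithin (0:ℝ) (Ioi 0), 0 < f' t := by
    have h1 : ∀ᶠ t in nhdsWithin (0:ℝ) (Set.Ioi 0), 0 < slope f' 0 t :=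
      (hs.mono_left (nhdsWithin_mono _ (by intro x hx; exact ne_of_gt hx))).eventually
        (eventually_gt_nhds h)
    filter_upwards [h1, self_mem_nhdsWithin] with t ht ht0
    have hst : slope f' 0 t = f' t / t := by simp [slope_def_field, h0]
    rw [hst] at ht
    have := mul_pos ht (show (0:ℝ) < t from ht0)
    rwa [div_mul_cancel₀ _ (ne_of_gt ht0)] at this
  obtain ⟨δ1, hδ1, hIoo⟩ := mem_nhdsGT_iff_exists_Ioo_subset.1 hpos
  obtain ⟨ε, hε, hball⟩ := Metric.eventually_nhds_iff.1 (hf.and hmax)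
  set t : ℝ := min δ1 ε / 2 with htdef
  have ht0 : 0 < t := by
    have : 0 < min δ1 ε := lt_min hδ1 hε
    simp only [htdef]; linarith
  have htδ : t < δ1 := by
    have : min δ1 ε ≤ δ1 := min_le_left _ _
    have h2 : min δ1 ε / 2 < min δ1 ε := by
      have : 0 < min δ1 ε := lt_min hδ1 hε
      linarith
    linarith
  have htε : t < ε := by
    have : min δ1 ε ≤ ε := min_le_right _ _
    have h2 : min δ1 ε / 2 < min δ1 ε := by
      have : 0 < min δ1 ε := lt_min hδ1 hε
      linarith
    linarith
  have hmem : ∀ s ∈ Icc (0:ℝ) t, HasDerivAt f (f' s) s ∧ f s ≤ f 0 := by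
    intro s hs
    apply hball
    rw [Real.dist_eq, sub_zero, abs_of_nonneg hs.1]
    exact lt_of_le_of_lt hs.2 htε
  have hcont : ContinuousOn f (Icc 0 t) := fun s hs =>
    ((hmem s hs).1.continuousAt).continuousWithinAt
  obtain ⟨y, hy, hslope⟩ := exists_hasDerivAt_eq_slope f f' ht0 hcont
    (fun x hx => (hmem x ⟨le_of_lt hx.1, le_of_lt hx.2⟩).1)
  have hy' : 0 < f' y := hIoo ⟨hy.1, lt_trans hy.2 htδ⟩
  have hft : f t ≤ f 0 := (hmem t ⟨le_of_lt ht0, le_refl t⟩).2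
  rw [hslope] at hy'
  have : (f t - f 0) / (t - 0) ≤ 0 := by
    apply div_nonpos_of_nonpos_of_nonneg <;> linarith
  linarith

lemma second_dir_nonpos {n : ℕ} {v : EuclideanSpace ℝ (Fin n) → ℝ}
    {Ω : Set (EuclideanSpace ℝ (Fin n))} (hΩ : IsOpen Ω)
    {y : EuclideanSpace ℝ (Fin n)} (hy : y ∈ Ω)
    (hv : ContDiffOn ℝ 2 v Ω) (hmax : IsLocalMax v y)
    (e : EuclideanSpace ℝ (Fin n)) :
    fderiv ℝ (fun x => fderiv ℝ v x e) y e ≤ 0 := by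
  set L : ℝ → EuclideanSpace ℝ (Fin n) := fun t => y + t • e with hLdef
  have hL0 : L 0 = y := by simp [hLdef]
  have hL : ∀ t, HasDerivAt L e t := by
    intro t
    have h1 : HasDerivAt (fun t : ℝ => t • e) ((1:ℝ) • e) t :=
      (hasDerivAt_id t).smul_const e
    have h2 := h1.const_add y
    rw [one_smul] at h2
    exact h2
  have hLc : Continuous L := by fun_prop
  have hdiff : ∀ x ∈ Ω, DifferentiableAt ℝ v x := fun x hx =>
    (hv.contDiffAt (hΩ.mem_nhds hx)).differentiableAt (by norm_num)
  -- f and f'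
  set f : ℝ → ℝ := fun t => v (L t) with hfdef
  set f' : ℝ → ℝ := fun t => fderiv ℝ v (L t) e with hf'def
  have hLmem : ∀ᶠ t in nhds (0:ℝ), L t ∈ Ω := by
    have := hLc.continuousAt (x := (0:ℝ))
    rw [ContinuousAt, hL0] at this
    exact this (hΩ.mem_nhds hy)
  have hf : ∀ᶠ t in nhds (0:ℝ), HasDerivAt f (f' t) t := by
    filter_upwards [hLmem] with t ht
    exact ((hdiff _ ht).hasFDerivAt).comp_hasDerivAt t (hL t)
  -- derivative of f' at 0
  have hfd : DifferentiableAt ℝ (fderiv ℝ v) y :=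
    ((hv.contDiffAt (hΩ.mem_nhds hy)).fderiv_right (m := 1) (by norm_num)).differentiableAt
      (by norm_num)
  have hg : DifferentiableAt ℝ (fun x => fderiv ℝ v x e) y :=
    hfd.clm_apply (differentiableAt_const e)
  have hf' : HasDerivAt f' (fderiv ℝ (fun x => fderiv ℝ v x e) y e) 0 := by
    have hgf := hg.hasFDerivAt
    rw [← hL0] at hgf
    have h2 := hgf.comp_hasDerivAt 0 (hL 0)
    rw [hL0] at h2
    exact h2
  have hmaxf : IsLocalMax f 0 := by
    have h1 : Filter.Tendsto L (nhds 0) (nhds y) := by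
      have := hLc.continuousAt (x := (0:ℝ)); rwa [ContinuousAt, hL0] at this
    have := h1.eventually hmax
    simpa [hfdef, IsLocalMax, IsMaxFilter, hL0] using this
  exact sd_test hmaxf hf hf'


variable {n : ℕ}
local notation "E" => EuclideanSpace ℝ (Fin n)

lemma quad_hasFDeriv (c : ℝ) (x₀ x : E) :
    HasFDerivAt (fun x : E => c * ⟪x - x₀, x - x₀⟫)
      (c • ((fderivInnerCLM ℝ (x - x₀, x - x₀)).comp
        ((ContinuousLinearMap.id ℝ E).prod (ContinuousLinearMap.id ℝ E)))) x := by
  have hsub : HasFDerivAt (fun x : E => x - x₀) (ContinuousLinearMap.id ℝ E) x :=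
    (hasFDerivAt_id x).sub_const x₀
  exact (hsub.inner ℝ hsub).const_mul c

lemma quad_fderiv_apply (c : ℝ) (x₀ x w : E) :
    fderiv ℝ (fun x : E => c * ⟪x - x₀, x - x₀⟫) x w = 2 * c * ⟪x - x₀, w⟫ := by
  rw [(quad_hasFDeriv c x₀ x).fderiv]
  simp only [ContinuousLinearMap.smul_apply, ContinuousLinearMap.coe_comp', Function.comp_apply,
    ContinuousLinearMap.prod_apply, ContinuousLinearMap.coe_id', id_eq, fderivInnerCLM_apply,
    smul_eq_mul]
  rw [real_inner_comm w (x - x₀)]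
  ring

lemma lin_hasFDeriv (c : ℝ) (x₀ e y : E) :
    HasFDerivAt (fun x : E => 2 * c * ⟪x - x₀, e⟫)
      ((2 * c) • ((innerSL ℝ e).comp (ContinuousLinearMap.id ℝ E))) y := by
  have hsub : HasFDerivAt (fun x : E => x - x₀) (ContinuousLinearMap.id ℝ E) y :=
    (hasFDerivAt_id y).sub_const x₀
  have h1 : HasFDerivAt (fun x : E => (innerSL ℝ e) (x - x₀))
      ((innerSL ℝ e).comp (ContinuousLinearMap.id ℝ E)) y :=
    ((innerSL ℝ e).hasFDerivAt).comp y hsub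
  have h2 := h1.const_mul (2 * c)
  have hfe : (fun x : E => 2 * c * ⟪x - x₀, e⟫)
      = fun x : E => 2 * c * ((innerSL ℝ e) (x - x₀)) := by
    funext x
    rw [real_inner_comm e (x - x₀)]
    rfl
  rw [hfe]
  exact h2

lemma lin_fderiv_apply (c : ℝ) (x₀ e y : E) :
    fderiv ℝ (fun x : E => 2 * c * ⟪x - x₀, e⟫) y e = 2 * c * ⟪e, e⟫ := by
  rw [(lin_hasFDeriv c x₀ e y).fderiv]
  simp only [ContinuousLinearMap.smul_apply, ContinuousLinearMap.coe_comp', Function.comp_apply,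
    ContinuousLinearMap.coe_id', id_eq, innerSL_apply_apply, smul_eq_mul]


theorem nondegeneracy_growth {n : ℕ} (hn : 1 ≤ n) (r κ : ℝ) (hr : 0 < r) (hκ : 0 < κ)
    (u : EuclideanSpace ℝ (Fin n) → ℝ)
    (hc : ContinuousOn u (Metric.closedBall 0 r))
    (hsm : ContDiffOn ℝ 2 u ({x | 0 < u x} ∩ Metric.ball 0 r))
    (hΔ : ∀ x ∈ {x | 0 < u x} ∩ Metric.ball (0 : EuclideanSpace ℝ (Fin n)) r,
      κ ≤ laplacian u x)
    (h0 : u 0 = 0)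
    (x₀ : EuclideanSpace ℝ (Fin n)) (hx₀ : x₀ ∈ Metric.ball (0 : EuclideanSpace ℝ (Fin n)) (r / 2))
    (hux₀ : 0 < u x₀) :
    κ * r ^ 2 / (16 * n) ≤ sSup (u '' Metric.sphere (0 : EuclideanSpace ℝ (Fin n)) r) := by
  classical
  have hn0 : (0:ℝ) < (n:ℝ) := by exact_mod_cast Nat.pos_of_ne_zero (by omega)
  set c : ℝ := κ / (4 * n) with hc_def
  have hcpos : 0 < c := by positivity
  set q : EuclideanSpace ℝ (Fin n) → ℝ := fun x => c * ⟪x - x₀, x - x₀⟫ with hq_def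
  set v : EuclideanSpace ℝ (Fin n) → ℝ := fun x => u x - q x with hv_def
  set Ω : Set (EuclideanSpace ℝ (Fin n)) := {x | 0 < u x} ∩ Metric.ball 0 r with hΩ_def
  have hco : ContinuousOn u (Metric.ball 0 r) := hc.mono Metric.ball_subset_closedBall
  have hΩo : IsOpen Ω := by
    rw [hΩ_def, Set.inter_comm]
    exact hco.isOpen_inter_preimage Metric.isOpen_ball isOpen_Ioi
  have hqCD : ContDiff ℝ 2 q :=
    contDiff_const.mul ((contDiff_id.sub contDiff_const).inner ℝ (contDiff_id.sub contDiff_const))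
  have hqdiff : ∀ x, DifferentiableAt ℝ q x := fun x => (quad_hasFDeriv c x₀ x).differentiableAt
  have hudiff : ∀ x ∈ Ω, DifferentiableAt ℝ u x := fun x hx =>
    (hsm.contDiffAt (hΩo.mem_nhds hx)).differentiableAt (by norm_num)
  have hvC : ContDiffOn ℝ 2 v Ω := hsm.sub hqCD.contDiffOn
  have hΩsub : Ω ⊆ Metric.closedBall 0 r := fun x hx => Metric.ball_subset_closedBall hx.2
  have hclsub : closure Ω ⊆ Metric.closedBall 0 r :=
    closure_minimal hΩsub Metric.isClosed_closedBall
  have hK : IsCompact (closure Ω) :=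
    (isCompact_closedBall (0 : EuclideanSpace ℝ (Fin n)) r).of_isClosed_subset
      isClosed_closure hclsub
  have hx₀Ω : x₀ ∈ Ω := ⟨hux₀, Metric.ball_subset_ball (by linarith) hx₀⟩
  have hvcont : ContinuousOn v (closure Ω) := (hc.mono hclsub).sub hqCD.continuous.continuousOn
  obtain ⟨y, hyK, hymax⟩ := hK.exists_isMaxOn ⟨x₀, subset_closure hx₀Ω⟩ hvcont
  have hvx₀ : v x₀ = u x₀ := by simp [hv_def, hq_def]
  have hvy_pos : 0 < v y := by
    have h1 : v x₀ ≤ v y := hymax (subset_closure hx₀Ω)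
    rw [hvx₀] at h1
    linarith
  have hyΩ : y ∉ Ω := by
    intro hyΩ
    have hlocmax : IsLocalMax v y :=
      Filter.eventually_of_mem (hΩo.mem_nhds hyΩ) (fun x hx => hymax (subset_closure hx))
    have hkey : ∀ i : Fin n,
        fderiv ℝ (fun x => fderiv ℝ v x (EuclideanSpace.single i 1)) y
            (EuclideanSpace.single i 1)
          = fderiv ℝ (fun x => fderiv ℝ u x (EuclideanSpace.single i 1)) y
            (EuclideanSpace.single i 1) - 2 * c := by
      intro i
      set e : EuclideanSpace ℝ (Fin n) := EuclideanSpace.single i 1 with he_def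
      have hee : ⟪e, e⟫ = (1:ℝ) := by
        rw [real_inner_self_eq_norm_sq, he_def, EuclideanSpace.norm_single]
        norm_num
      have hEq : (fun x => fderiv ℝ v x e)
          =ᶠ[nhds y] (fun x => fderiv ℝ u x e - 2 * c * ⟪x - x₀, e⟫) := by
        filter_upwards [hΩo.mem_nhds hyΩ] with x hx
        have hsub : fderiv ℝ v x = fderiv ℝ u x - fderiv ℝ q x :=
          fderiv_sub (hudiff x hx) (hqdiff x)
        rw [hsub, ContinuousLinearMap.sub_apply, hq_def, quad_fderiv_apply]
      have hG : DifferentiableAt ℝ (fun x => fderiv ℝ u x e) y :=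
        (((hsm.contDiffAt (hΩo.mem_nhds hyΩ)).fderiv_right (m := 1)
          (by norm_num)).differentiableAt (by norm_num)).clm_apply (differentiableAt_const e)
      have hH : DifferentiableAt ℝ (fun x => 2 * c * ⟪x - x₀, e⟫) y :=
        (lin_hasFDeriv c x₀ e y).differentiableAt
      rw [hEq.fderiv_eq, fderiv_fun_sub hG hH, ContinuousLinearMap.sub_apply, lin_fderiv_apply, hee,
        mul_one]
    have hlap : laplacian v y = laplacian u y - 2 * c * n := by
      unfold laplacian
      rw [Finset.sum_congr rfl (fun i _ => hkey i), Finset.sum_sub_distrib, Finset.sum_const,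
        Finset.card_univ, Fintype.card_fin]
      push_cast
      ring
    have hnonpos : laplacian v y ≤ 0 := by
      unfold laplacian
      exact Finset.sum_nonpos (fun i _ => second_dir_nonpos hΩo hyΩ hvC hlocmax _)
    have hκy := hΔ y hyΩ
    have h2cn : 2 * c * n = κ / 2 := by
      rw [hc_def]
      field_simp
      ring
    rw [hlap, h2cn] at hnonpos
    linarith
  have hyball : dist y 0 ≤ r := Metric.mem_closedBall.1 (hclsub hyK)
  have huy_pos : 0 < u y := by
    by_contra hle
    push_neg at hle
    have hq0 : (0:ℝ) ≤ q y := mul_nonneg hcpos.le real_inner_self_nonneg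
    have : v y ≤ 0 := by
      rw [hv_def]
      simp only
      linarith
    linarith
  have hysph : ‖y‖ = r := by
    rw [dist_zero_right] at hyball
    rcases lt_or_eq_of_le hyball with hlt | heq
    · exact absurd ⟨huy_pos, by rwa [Metric.mem_ball, dist_zero_right]⟩ hyΩ
    · exact heq
  have hx₀n : ‖x₀‖ < r / 2 := by rwa [Metric.mem_ball, dist_zero_right] at hx₀
  have hyx₀ : r / 2 ≤ ‖y - x₀‖ := by
    have h1 : ‖y‖ - ‖x₀‖ ≤ ‖y - x₀‖ := norm_sub_norm_le y x₀
    linarith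
  have hqy : c * (r / 2) ^ 2 ≤ q y := by
    rw [hq_def]
    simp only
    rw [real_inner_self_eq_norm_sq]
    have := pow_le_pow_left₀ (by positivity : (0:ℝ) ≤ r / 2) hyx₀ 2
    nlinarith
  have huy : c * (r / 2) ^ 2 ≤ u y := by
    have h1 : u y = v y + q y := by rw [hv_def]; ring
    linarith
  have himg : u y ∈ u '' Metric.sphere (0 : EuclideanSpace ℝ (Fin n)) r :=
    ⟨y, by rwa [Metric.mem_sphere, dist_zero_right], rfl⟩
  have hbdd : BddAbove (u '' Metric.sphere (0 : EuclideanSpace ℝ (Fin n)) r) :=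
    ((isCompact_sphere 0 r).image_of_continuousOn
      (hc.mono Metric.sphere_subset_closedBall)).bddAbove
  have hle := le_csSup hbdd himg
  have harith : κ * r ^ 2 / (16 * n) = c * (r / 2) ^ 2 := by
    rw [hc_def]
    field_simp
    ring
  linarith
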